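/- Let n ≥ 2 and let a₁ > a₂ > … > aₙ be real numbers. For k = 1,…,n define Fₖ : ℝⁿ × ℝⁿ → ℝ by Fₖ(x, v) = vₖ² + Σ_{l ≠ k} (xₖ vₗ − xₗ vₖ)² / (aₖ − aₗ). Then the functions F₁,…,Fₙ pairwise Poisson commute with respect to the canonical Poisson bracket on ℝⁿ × ℝⁿ: {Fₖ, Fₘ} = 0 identically for all k, m. (This is the ambient form of Moser's theorem: restricted to the tangent bundle of the ellipsoid ⟨A⁻¹x, x⟩ = 1 with A = diag(a₁,…,aₙ), these functions give complete integrability of the geodesic flow on the ellipsoid.) -/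

import Mathlib

open Finset

/-- The canonical Poisson bracket of two functions on `ℝⁿ × ℝⁿ` (coordinates `(x, p)`):
`{F,G} = ∑ i, (∂F/∂xᵢ · ∂G/∂pᵢ − ∂F/∂pᵢ · ∂G/∂xᵢ)`. -/
noncomputable def poissonBracket (n : ℕ) (F G : (Fin n → ℝ) × (Fin n → ℝ) → ℝ)
    (z : (Fin n → ℝ) × (Fin n → ℝ)) : ℝ :=
  ∑ i : Fin n,
    (fderiv ℝ F z (Pi.single i 1, 0) * fderiv ℝ G z (0, Pi.single i 1) -
      fderiv ℝ F z (0, Pi.single i 1) * fderiv ℝ G z (Pi.single i 1, 0))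

open ContinuousLinearMap

variable {n : ℕ}
noncomputable def Px (i : Fin n) : ((Fin n → ℝ) × (Fin n → ℝ)) →L[ℝ] ℝ :=
  (proj i).comp (fst ℝ (Fin n → ℝ) (Fin n → ℝ))
noncomputable def Pv (i : Fin n) : ((Fin n → ℝ) × (Fin n → ℝ)) →L[ℝ] ℝ :=
  (proj i).comp (snd ℝ (Fin n → ℝ) (Fin n → ℝ))
noncomputable def Lw (a : Fin n → ℝ) (k l : Fin n) (z : (Fin n → ℝ) × (Fin n → ℝ)) :
    ((Fin n → ℝ) × (Fin n → ℝ)) →L[ℝ] ℝ :=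
  (z.1 k • Pv l + z.2 l • Px k) - (z.1 l • Pv k + z.2 k • Px l)
noncomputable def Dg (a : Fin n → ℝ) (k : Fin n) (z : (Fin n → ℝ) × (Fin n → ℝ)) :
    ((Fin n → ℝ) × (Fin n → ℝ)) →L[ℝ] ℝ :=
  (z.2 k • Pv k + z.2 k • Pv k) + ∑ l ∈ Finset.univ.erase k,
    (a k - a l)⁻¹ • ((z.1 k * z.2 l - z.1 l * z.2 k) • Lw a k l z
      + (z.1 k * z.2 l - z.1 l * z.2 k) • Lw a k l z)

lemma DgX (a : Fin n → ℝ) (k i : Fin n) (z : (Fin n → ℝ) × (Fin n → ℝ)) :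
    Dg a k z (Pi.single i 1, 0) =
      (if k = i then ∑ l : Fin n,
          2 * (a k - a l)⁻¹ * (z.1 k * z.2 l - z.1 l * z.2 k) * z.2 l else 0)
        - 2 * (a k - a i)⁻¹ * (z.1 k * z.2 i - z.1 i * z.2 k) * z.2 k := by
  simp only [Dg, Lw, Px, Pv, ContinuousLinearMap.add_apply, ContinuousLinearMap.sub_apply,
    ContinuousLinearMap.smul_apply, ContinuousLinearMap.coe_sum', Finset.sum_apply,
    ContinuousLinearMap.comp_apply, ContinuousLinearMap.coe_fst', ContinuousLinearMap.coe_snd',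
    ContinuousLinearMap.proj_apply, Pi.single_apply, smul_eq_mul, Pi.zero_apply, mul_zero]
  rw [Finset.sum_erase_eq_sub (Finset.mem_univ k)]
  by_cases h : k = i
  · simp [h, mul_sub]
    refine Finset.sum_congr rfl fun x _ => ?_
    by_cases hx : x = i <;> simp [hx] <;> ring
  · simp [h, mul_sub]
    rw [Finset.sum_eq_single i]
    · simp; ring
    · intro b _ hb; simp [hb]
    · simp

lemma DgV (a : Fin n → ℝ) (k i : Fin n) (z : (Fin n → ℝ) × (Fin n → ℝ)) :
    Dg a k z (0, Pi.single i 1) =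
      (if k = i then 2 * z.2 k - ∑ l : Fin n,
          2 * (a k - a l)⁻¹ * (z.1 k * z.2 l - z.1 l * z.2 k) * z.1 l else 0)
        + 2 * (a k - a i)⁻¹ * (z.1 k * z.2 i - z.1 i * z.2 k) * z.1 k := by
  simp only [Dg, Lw, Px, Pv, ContinuousLinearMap.add_apply, ContinuousLinearMap.sub_apply,
    ContinuousLinearMap.smul_apply, ContinuousLinearMap.coe_sum', Finset.sum_apply,
    ContinuousLinearMap.comp_apply, ContinuousLinearMap.coe_fst', ContinuousLinearMap.coe_snd',
    ContinuousLinearMap.proj_apply, Pi.single_apply, smul_eq_mul, Pi.zero_apply, mul_zero]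
  rw [Finset.sum_erase_eq_sub (Finset.mem_univ k)]
  by_cases h : k = i
  · simp [h, mul_sub]
    rw [show (2:ℝ) * z.2 i = z.2 i + z.2 i from by ring, eq_sub_iff_add_eq, add_assoc,
      add_eq_left, ← Finset.sum_add_distrib]
    refine Finset.sum_eq_zero fun x _ => ?_
    by_cases hx : x = i <;> simp [hx] <;> ring
  · simp [h, mul_sub]
    rw [Finset.sum_eq_single i]
    · simp; ring
    · intro b _ hb; simp [hb]
    · simp

lemma hG (a : Fin n → ℝ) (k : Fin n) (z) :
    HasFDerivAt (fun z : (Fin n → ℝ) × (Fin n → ℝ) =>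
      z.2 k * z.2 k + ∑ l ∈ Finset.univ.erase k,
        (a k - a l)⁻¹ * ((z.1 k * z.2 l - z.1 l * z.2 k) * (z.1 k * z.2 l - z.1 l * z.2 k)))
      (Dg a k z) z := by
  have hPx : ∀ (i : Fin n), HasFDerivAt (fun z : (Fin n → ℝ) × (Fin n → ℝ) => z.1 i) (Px i) z :=
    fun i => (Px i).hasFDerivAt
  have hPv : ∀ (i : Fin n), HasFDerivAt (fun z : (Fin n → ℝ) × (Fin n → ℝ) => z.2 i) (Pv i) z :=
    fun i => (Pv i).hasFDerivAt
  exact ((hPv k).mul (hPv k)).add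
    (HasFDerivAt.fun_sum fun l _ =>
      ((((hPx k).mul (hPv l)).sub ((hPx l).mul (hPv k))).mul
        (((hPx k).mul (hPv l)).sub ((hPx l).mul (hPv k)))).const_mul _)


/-- Moser's integrals of the geodesic flow on the ellipsoid pairwise Poisson commute
on `ℝⁿ × ℝⁿ`. -/
theorem moser_ellipsoid_integrals_commute (n : ℕ) (hn : 2 ≤ n) (a : Fin n → ℝ)
    (ha : StrictAnti a) (F : Fin n → (Fin n → ℝ) × (Fin n → ℝ) → ℝ)
    (hF : ∀ (k : Fin n) (x v : Fin n → ℝ),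
      F k (x, v) = (v k) ^ 2 +
        ∑ l ∈ Finset.univ.erase k, (x k * v l - x l * v k) ^ 2 / (a k - a l)) :
    ∀ (k m : Fin n) (z : (Fin n → ℝ) × (Fin n → ℝ)), poissonBracket n (F k) (F m) z = 0 := by
  intro k m z
  have hFg : ∀ j : Fin n, F j = fun z : (Fin n → ℝ) × (Fin n → ℝ) =>
      z.2 j * z.2 j + ∑ l ∈ Finset.univ.erase j,
        (a j - a l)⁻¹ * ((z.1 j * z.2 l - z.1 l * z.2 j) * (z.1 j * z.2 l - z.1 l * z.2 j)) := by
    intro j; funext w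
    rw [← Prod.mk.eta (p := w), hF]
    simp only [pow_two, div_eq_inv_mul]
  have hfd : ∀ (j : Fin n) (w), fderiv ℝ (F j) z w = Dg a j z w := by
    intro j w; rw [hFg j, (hG a j z).fderiv]
  by_cases hkm : k = m
  · subst hkm; simp only [poissonBracket]
    exact Finset.sum_eq_zero fun i _ => by ring
  simp only [poissonBracket, hfd, DgX, DgV]
  set Sk := ∑ l : Fin n, 2 * (a k - a l)⁻¹ * (z.1 k * z.2 l - z.1 l * z.2 k) * z.2 l with hSk
  set Tk := ∑ l : Fin n, 2 * (a k - a l)⁻¹ * (z.1 k * z.2 l - z.1 l * z.2 k) * z.1 l with hTk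
  set Sm := ∑ l : Fin n, 2 * (a m - a l)⁻¹ * (z.1 m * z.2 l - z.1 l * z.2 m) * z.2 l with hSm
  set Tm := ∑ l : Fin n, 2 * (a m - a l)⁻¹ * (z.1 m * z.2 l - z.1 l * z.2 m) * z.1 l with hTm
  have key : ∀ i : Fin n,
      ((if k = i then Sk else 0) - 2 * (a k - a i)⁻¹ * (z.1 k * z.2 i - z.1 i * z.2 k) * z.2 k) *
        ((if m = i then 2 * z.2 m - Tm else 0) +
          2 * (a m - a i)⁻¹ * (z.1 m * z.2 i - z.1 i * z.2 m) * z.1 m) -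
      ((if k = i then 2 * z.2 k - Tk else 0) +
          2 * (a k - a i)⁻¹ * (z.1 k * z.2 i - z.1 i * z.2 k) * z.1 k) *
        ((if m = i then Sm else 0) -
          2 * (a m - a i)⁻¹ * (z.1 m * z.2 i - z.1 i * z.2 m) * z.2 m) =
      (if k = i then
          Sk * (2 * (a m - a i)⁻¹ * (z.1 m * z.2 i - z.1 i * z.2 m) * z.1 m) +
            (2 * z.2 k - Tk) * (2 * (a m - a i)⁻¹ * (z.1 m * z.2 i - z.1 i * z.2 m) * z.2 m)
        else 0) +
      ((if m = i then
          -(2 * (a k - a i)⁻¹ * (z.1 k * z.2 i - z.1 i * z.2 k) * z.2 k * (2 * z.2 m - Tm)) -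
            2 * (a k - a i)⁻¹ * (z.1 k * z.2 i - z.1 i * z.2 k) * z.1 k * Sm
        else 0) +
        (2 * (a k - a i)⁻¹ * (z.1 k * z.2 i - z.1 i * z.2 k) * z.1 k *
            (2 * (a m - a i)⁻¹ * (z.1 m * z.2 i - z.1 i * z.2 m) * z.2 m) -
          2 * (a k - a i)⁻¹ * (z.1 k * z.2 i - z.1 i * z.2 k) * z.2 k *
            (2 * (a m - a i)⁻¹ * (z.1 m * z.2 i - z.1 i * z.2 m) * z.1 m))) := by
    intro i
    by_cases h1 : k = i <;> by_cases h2 : m = i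
    · exact absurd (h1.trans h2.symm) hkm
    · simp only [if_pos h1, if_neg h2]; ring
    · simp only [if_neg h1, if_pos h2]; ring
    · simp only [if_neg h1, if_neg h2]; ring
  rw [Finset.sum_congr rfl fun i _ => key i, Finset.sum_add_distrib, Finset.sum_add_distrib,
    Finset.sum_ite_eq, Finset.sum_ite_eq]
  simp only [Finset.mem_univ, if_true]
  have hterm : ∀ l ∈ (Finset.univ : Finset (Fin n)),
      2 * (a k - a l)⁻¹ * (z.1 k * z.2 l - z.1 l * z.2 k) * z.2 l *
          (2 * (a m - a k)⁻¹ * (z.1 m * z.2 k - z.1 k * z.2 m) * z.1 m) -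
        2 * (a k - a l)⁻¹ * (z.1 k * z.2 l - z.1 l * z.2 k) * z.1 l *
          (2 * (a m - a k)⁻¹ * (z.1 m * z.2 k - z.1 k * z.2 m) * z.2 m) +
        (2 * (a k - a m)⁻¹ * (z.1 k * z.2 m - z.1 m * z.2 k) * z.2 k *
            (2 * (a m - a l)⁻¹ * (z.1 m * z.2 l - z.1 l * z.2 m) * z.1 l) -
          2 * (a k - a m)⁻¹ * (z.1 k * z.2 m - z.1 m * z.2 k) * z.1 k *
            (2 * (a m - a l)⁻¹ * (z.1 m * z.2 l - z.1 l * z.2 m) * z.2 l)) +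
        (2 * (a k - a l)⁻¹ * (z.1 k * z.2 l - z.1 l * z.2 k) * z.1 k *
            (2 * (a m - a l)⁻¹ * (z.1 m * z.2 l - z.1 l * z.2 m) * z.2 m) -
          2 * (a k - a l)⁻¹ * (z.1 k * z.2 l - z.1 l * z.2 k) * z.2 k *
            (2 * (a m - a l)⁻¹ * (z.1 m * z.2 l - z.1 l * z.2 m) * z.1 m)) = 0 := by
    intro l _
    by_cases h1 : l = k
    · simp only [h1, sub_self, inv_zero]; ring
    by_cases h2 : l = m
    · simp only [h2, sub_self, inv_zero]; ring
    · have d1 : a k - a m ≠ 0 := sub_ne_zero.mpr (ha.injective.ne hkm)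
      have d2 : a m - a k ≠ 0 := sub_ne_zero.mpr (ha.injective.ne (Ne.symm hkm))
      have d3 : a k - a l ≠ 0 := sub_ne_zero.mpr (ha.injective.ne fun h => h1 h.symm)
      have d4 : a m - a l ≠ 0 := sub_ne_zero.mpr (ha.injective.ne fun h => h2 h.symm)
      field_simp
      ring
  have hcomb := Finset.sum_eq_zero hterm
  have hscal : 2 * z.2 k * (2 * (a m - a k)⁻¹ * (z.1 m * z.2 k - z.1 k * z.2 m) * z.2 m) =
      2 * (a k - a m)⁻¹ * (z.1 k * z.2 m - z.1 m * z.2 k) * z.2 k * (2 * z.2 m) := by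
    rw [show (a m - a k)⁻¹ = -(a k - a m)⁻¹ by rw [← neg_sub, inv_neg]]; ring
  have e1 : Sk * (2 * (a m - a k)⁻¹ * (z.1 m * z.2 k - z.1 k * z.2 m) * z.1 m) =
      ∑ l : Fin n, 2 * (a k - a l)⁻¹ * (z.1 k * z.2 l - z.1 l * z.2 k) * z.2 l *
        (2 * (a m - a k)⁻¹ * (z.1 m * z.2 k - z.1 k * z.2 m) * z.1 m) := by
    rw [hSk]; exact Finset.sum_mul _ _ _
  have e2 : Tk * (2 * (a m - a k)⁻¹ * (z.1 m * z.2 k - z.1 k * z.2 m) * z.2 m) =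
      ∑ l : Fin n, 2 * (a k - a l)⁻¹ * (z.1 k * z.2 l - z.1 l * z.2 k) * z.1 l *
        (2 * (a m - a k)⁻¹ * (z.1 m * z.2 k - z.1 k * z.2 m) * z.2 m) := by
    rw [hTk]; exact Finset.sum_mul _ _ _
  have e3 : 2 * (a k - a m)⁻¹ * (z.1 k * z.2 m - z.1 m * z.2 k) * z.2 k * Tm =
      ∑ l : Fin n, 2 * (a k - a m)⁻¹ * (z.1 k * z.2 m - z.1 m * z.2 k) * z.2 k *
        (2 * (a m - a l)⁻¹ * (z.1 m * z.2 l - z.1 l * z.2 m) * z.1 l) := by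
    rw [hTm]; exact Finset.mul_sum _ _ _
  have e4 : 2 * (a k - a m)⁻¹ * (z.1 k * z.2 m - z.1 m * z.2 k) * z.1 k * Sm =
      ∑ l : Fin n, 2 * (a k - a m)⁻¹ * (z.1 k * z.2 m - z.1 m * z.2 k) * z.1 k *
        (2 * (a m - a l)⁻¹ * (z.1 m * z.2 l - z.1 l * z.2 m) * z.2 l) := by
    rw [hSm]; exact Finset.mul_sum _ _ _
  have e5 : (∑ i : Fin n,
      (2 * (a k - a i)⁻¹ * (z.1 k * z.2 i - z.1 i * z.2 k) * z.1 k *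
          (2 * (a m - a i)⁻¹ * (z.1 m * z.2 i - z.1 i * z.2 m) * z.2 m) -
        2 * (a k - a i)⁻¹ * (z.1 k * z.2 i - z.1 i * z.2 k) * z.2 k *
          (2 * (a m - a i)⁻¹ * (z.1 m * z.2 i - z.1 i * z.2 m) * z.1 m))) =
      (∑ i : Fin n, 2 * (a k - a i)⁻¹ * (z.1 k * z.2 i - z.1 i * z.2 k) * z.1 k *
          (2 * (a m - a i)⁻¹ * (z.1 m * z.2 i - z.1 i * z.2 m) * z.2 m)) -
      ∑ i : Fin n, 2 * (a k - a i)⁻¹ * (z.1 k * z.2 i - z.1 i * z.2 k) * z.2 k *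
          (2 * (a m - a i)⁻¹ * (z.1 m * z.2 i - z.1 i * z.2 m) * z.1 m) :=
    Finset.sum_sub_distrib _ _
  simp only [Finset.sum_add_distrib, Finset.sum_sub_distrib] at hcomb
  linear_combination e1 - e2 + e3 - e4 + hscal + e5 + hcomb
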